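/- arXiv:1402.2831 — 2 statements merged into one kernel-verified Lean document; each statement's English description precedes it below -/
import Mathlib

section
/- Let ω > 0, b > 0, D > 0 and L > π/√ω. Then there exists a unique x̄ in the interval (π/(2√ω), π/√ω) satisfying √(b/(ωD)) · tan(√ω x̄) = tanh(√(b/D)(x̄ − L)). -/
open Real

lemma my_tanh_hasDerivAt (x : ℝ) : HasDerivAt Real.tanh (1 - Real.tanh x ^ 2) x := by
  have h1 := Real.hasDerivAt_sinh x
  have h2 := Real.hasDerivAt_cosh x
  have hc : Real.cosh x ≠ 0 := (Real.cosh_pos x).ne'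
  have h := h1.div h2 hc
  have hfun : (fun y => Real.sinh y / Real.cosh y) = Real.tanh := by
    funext y; rw [Real.tanh_eq_sinh_div_cosh]
  rw [show (Real.sinh / Real.cosh) = Real.tanh from hfun] at h
  refine h.congr_deriv ?_
  rw [Real.tanh_eq_sinh_div_cosh]
  have hsq := Real.cosh_sq x
  field_simp

lemma my_neg_one_lt_tanh (x : ℝ) : -1 < Real.tanh x := by
  rw [Real.tanh_eq_sinh_div_cosh, lt_div_iff₀ (Real.cosh_pos x)]
  nlinarith [Real.sinh_add_cosh x, Real.exp_pos x]

lemma my_tanh_lt_one (x : ℝ) : Real.tanh x < 1 := by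
  rw [Real.tanh_eq_sinh_div_cosh, div_lt_iff₀ (Real.cosh_pos x)]
  nlinarith [Real.cosh_sub_sinh x, Real.exp_pos (-x)]

lemma my_tanh_continuous : Continuous Real.tanh := by
  have h : Continuous fun y : ℝ => Real.sinh y / Real.cosh y :=
    Real.continuous_sinh.div Real.continuous_cosh fun y => (Real.cosh_pos y).ne'
  have hfun : Real.tanh = fun y : ℝ => Real.sinh y / Real.cosh y :=
    funext fun y => Real.tanh_eq_sinh_div_cosh y
  rw [hfun]; exact h

lemma my_tanh_neg {x : ℝ} (hx : x < 0) : Real.tanh x < 0 := by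
  rw [Real.tanh_eq_sinh_div_cosh]
  exact div_neg_of_neg_of_pos (Real.sinh_neg_iff.mpr hx) (Real.cosh_pos x)

set_option maxHeartbeats 1000000 in
theorem stmt_2 (ω b D L : ℝ) (hω : 0 < ω) (hb : 0 < b) (hD : 0 < D)
    (hL : π / Real.sqrt ω < L) :
    ∃! x : ℝ, x ∈ Set.Ioo (π / (2 * Real.sqrt ω)) (π / Real.sqrt ω) ∧
      Real.sqrt (b / (ω * D)) * Real.tan (Real.sqrt ω * x) =
        Real.tanh (Real.sqrt (b / D) * (x - L)) := by
  have hπ : 0 < π := Real.pi_pos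
  set s := Real.sqrt ω with hs
  have hs0 : 0 < s := Real.sqrt_pos.mpr hω
  set c := Real.sqrt (b / (ω * D)) with hc
  have hc0 : 0 < c := Real.sqrt_pos.mpr (by positivity)
  set k := Real.sqrt (b / D) with hk
  have hk0 : 0 < k := Real.sqrt_pos.mpr (by positivity)
  have hcs : c * s = k := by
    rw [hc, hs, hk, ← Real.sqrt_mul (by positivity)]
    congr 1
    field_simp
  clear_value s c k
  -- the point x0
  set t := Real.arctan (-(2 / c)) with ht
  have ht1 : -(π / 2) < t := Real.neg_pi_div_two_lt_arctan _
  have ht2 : t < 0 := by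
    have h2c : -(2 / c) < 0 := by
      have : 0 < 2 / c := by positivity
      linarith
    have := Real.arctan_strictMono h2c
    rwa [Real.arctan_zero] at this
  have htan : Real.tan t = -(2 / c) := Real.tan_arctan _
  clear_value t
  set x0 := (t + π) / s with hx0
  have hsx0 : s * x0 = t + π := by rw [hx0]; field_simp
  have hx0l : π / (2 * s) < x0 := by
    rw [hx0, div_lt_div_iff₀ (by positivity) hs0]
    nlinarith [mul_lt_mul_of_pos_right ht1 hs0]
  have hx0r : x0 < π / s := by
    rw [hx0, div_lt_div_iff₀ hs0 hs0]
    nlinarith [mul_neg_of_neg_of_pos ht2 hs0]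
  have htanx0 : Real.tan (s * x0) = -(2 / c) := by
    rw [hsx0, Real.tan_periodic t, htan]
  clear_value x0
  -- the function f
  set f : ℝ → ℝ := fun x => c * Real.tan (s * x) - Real.tanh (k * (x - L)) with hf
  clear_value f
  have hfeq : ∀ y, f y = c * Real.tan (s * y) - Real.tanh (k * (y - L)) := fun y => by rw [hf]
  have hLgt : ∀ x : ℝ, x ≤ π / s → k * (x - L) < 0 := fun x hx =>
    mul_neg_of_pos_of_neg hk0 (by linarith)
  -- cos (s*x) ≠ 0 on Icc x0 (π/s)
  have hcosne : ∀ x ∈ Set.Icc x0 (π / s), Real.cos (s * x) ≠ 0 := by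
    intro x hx
    have h1 : π / 2 < s * x := by
      have h := mul_le_mul_of_nonneg_left hx.1 hs0.le
      rw [hsx0] at h
      linarith
    have h2 : s * x ≤ π := by
      have := (le_div_iff₀ hs0).mp hx.2
      linarith [mul_comm x s]
    have := Real.cos_neg_of_pi_div_two_lt_of_lt h1 (by linarith)
    linarith
  -- continuity
  have hcont : ContinuousOn f (Set.Icc x0 (π / s)) := by
    rw [hf]
    intro x hx
    apply ContinuousAt.continuousWithinAt
    apply ContinuousAt.sub
    · exact continuousAt_const.mul
        ((Real.continuousAt_tan.mpr (hcosne x hx)).comp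
          ((continuous_const.mul continuous_id).continuousAt))
    · exact (my_tanh_continuous.comp (by fun_prop :
        Continuous fun x : ℝ => k * (x - L))).continuousAt
  -- strict monotonicity
  have hmono : StrictMonoOn f (Set.Icc x0 (π / s)) := by
    apply strictMonoOn_of_deriv_pos (convex_Icc _ _) hcont
    intro x hx
    rw [interior_Icc] at hx
    have hxIcc : x ∈ Set.Icc x0 (π / s) := Set.mem_Icc.mpr ⟨hx.1.le, hx.2.le⟩
    have hne := hcosne x hxIcc
    have hlin : HasDerivAt (fun y : ℝ => s * y) s x := by
      simpa using (hasDerivAt_id x).const_mul s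
    have hd1 : HasDerivAt (fun y => Real.tan (s * y)) (1 / Real.cos (s * x) ^ 2 * s) x := by
      simpa [Function.comp_def] using (Real.hasDerivAt_tan hne).comp x hlin
    have hlin2 : HasDerivAt (fun y : ℝ => k * (y - L)) k x := by
      simpa using ((hasDerivAt_id x).sub_const L).const_mul k
    have hd2 : HasDerivAt (fun y => Real.tanh (k * (y - L)))
        ((1 - Real.tanh (k * (x - L)) ^ 2) * k) x := by
      simpa [Function.comp_def] using (my_tanh_hasDerivAt (k * (x - L))).comp x hlin2
    have hd : HasDerivAt f (c * (1 / Real.cos (s * x) ^ 2 * s) -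
        (1 - Real.tanh (k * (x - L)) ^ 2) * k) x := by
      rw [hf]; exact (hd1.const_mul c).sub hd2
    rw [hd.deriv]
    have hcos2 : 0 < Real.cos (s * x) ^ 2 := by positivity
    have hcos2le : Real.cos (s * x) ^ 2 ≤ 1 := by
      nlinarith [Real.neg_one_le_cos (s * x), Real.cos_le_one (s * x)]
    have h1 : k ≤ c * (1 / Real.cos (s * x) ^ 2 * s) := by
      rw [mul_comm (1 / Real.cos (s * x) ^ 2) s, ← mul_assoc, hcs]
      have hone : 1 ≤ 1 / Real.cos (s * x) ^ 2 := by
        rw [le_div_iff₀ hcos2]; linarith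
      nlinarith [mul_le_mul_of_nonneg_left hone hk0.le]
    have htneg : Real.tanh (k * (x - L)) < 0 := my_tanh_neg (hLgt x hx.2.le)
    have hTpos : 0 < Real.tanh (k * (x - L)) ^ 2 := by nlinarith
    have h2 : (1 - Real.tanh (k * (x - L)) ^ 2) * k < k := by
      nlinarith [mul_pos hTpos hk0]
    linarith
  -- endpoint values
  have hfx0 : f x0 < 0 := by
    have h1 : -1 < Real.tanh (k * (x0 - L)) := my_neg_one_lt_tanh _
    simp only [hf]
    rw [htanx0]
    have : c * -(2 / c) = -2 := by field_simp
    rw [this]; linarith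
  have hfr : 0 < f (π / s) := by
    have h1 : s * (π / s) = π := by field_simp
    have h2 : Real.tanh (k * (π / s - L)) < 0 := my_tanh_neg (hLgt _ le_rfl)
    simp only [hf]
    rw [h1, Real.tan_pi]
    linarith
  -- existence via IVT
  have hIVT := intermediate_value_Ioo hx0r.le hcont
  have h0 : (0 : ℝ) ∈ Set.Ioo (f x0) (f (π / s)) := ⟨hfx0, hfr⟩
  obtain ⟨x, hxmem, hfx⟩ := hIVT h0
  -- any solution in the big interval is ≥ x0
  have hbig : ∀ y ∈ Set.Ioo (π / (2 * s)) (π / s),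
      c * Real.tan (s * y) = Real.tanh (k * (y - L)) → y ∈ Set.Icc x0 (π / s) ∧ f y = 0 := by
    intro y hy heq
    have hfy : f y = 0 := by simp only [hf]; rw [heq]; ring
    constructor
    · constructor
      · by_contra hlt
        push_neg at hlt
        -- y < x0 : show f y < 0, contradiction
        have hsy1 : π / 2 < s * y := by
          have := (div_lt_iff₀ (by positivity : (0:ℝ) < 2 * s)).mp hy.1
          nlinarith
        have hsy2 : s * y < t + π := by
          have := mul_lt_mul_of_pos_left hlt hs0
          rwa [hsx0] at this
        -- use tan periodicity: tan (s y) = tan (s y - π)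
        have hper : Real.tan (s * y) = Real.tan (s * y - π) :=
          (Real.tan_periodic.sub_eq (s * y)).symm
        have hmem1 : s * y - π ∈ Set.Ioo (-(π / 2)) (π / 2) := by
          constructor <;> [linarith; linarith]
        have hmem2 : t ∈ Set.Ioo (-(π / 2)) (π / 2) := ⟨ht1, by linarith⟩
        have hlt2 : Real.tan (s * y - π) < Real.tan t :=
          Real.strictMonoOn_tan hmem1 hmem2 (by linarith)
        rw [htan] at hlt2
        have hylt : c * Real.tan (s * y) < -2 := by
          rw [hper]
          calc c * Real.tan (s * y - π) < c * -(2 / c) :=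
                (mul_lt_mul_iff_right₀ hc0).mpr hlt2
            _ = -2 := by field_simp
        have h1 : -1 < Real.tanh (k * (y - L)) := my_neg_one_lt_tanh _
        have : f y < 0 := by simp only [hf]; linarith
        linarith [hfy ▸ this]
      · exact hy.2.le
    · exact hfy
  refine ⟨x, ⟨⟨by linarith [hxmem.1], hxmem.2⟩, ?_⟩, ?_⟩
  · have : c * Real.tan (s * x) - Real.tanh (k * (x - L)) = 0 := by
      rw [← hfeq x]; exact hfx
    linarith
  · rintro y ⟨hymem, hyeq⟩
    obtain ⟨hyIcc, hfy⟩ := hbig y hymem hyeq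
    have hxIcc : x ∈ Set.Icc x0 (π / s) := ⟨hxmem.1.le, hxmem.2.le⟩
    exact hmono.injOn hyIcc hxIcc (by rw [hfy, hfx])
end

section
/- Let ω > 0, and on [0, x̄] with x̄ ∈ (π/(2√ω), π/√ω), define φ(x) = (2κbK/(ωχD)) cos(√ω x)/cos(√ω x̄) − aK/(ωD) and ρ(x) = (χ/(2κ))φ(x) + K where ω = (aχ/(2κ) − b)/D and K > 0. Then on (0, x̄), ρ and φ satisfy the stationary system P(ρ)_x = χρφ_x (with P(ρ) = κρ²) and Dφ_xx + aρ − bφ = 0. -/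
open Real

theorem stmt_3 (κ χ D a b K ω xb : ℝ)
    (hκ : 0 < κ) (hχ : 0 < χ) (hD : 0 < D) (ha : 0 < a) (hb : 0 < b)
    (hK : 0 < K)
    (hω : ω = (a * χ / (2 * κ) - b) / D) (hωpos : 0 < ω)
    (hxb : xb ∈ Set.Ioo (π / (2 * Real.sqrt ω)) (π / Real.sqrt ω))
    (φ ρ : ℝ → ℝ)
    (hφ : ∀ x : ℝ, φ x = (2 * κ * b * K / (ω * χ * D)) *
        Real.cos (Real.sqrt ω * x) / Real.cos (Real.sqrt ω * xb) - a * K / (ω * D))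
    (hρ : ∀ x : ℝ, ρ x = χ / (2 * κ) * φ x + K) :
    ∀ x ∈ Set.Ioo (0 : ℝ) xb,
      deriv (fun y => κ * (ρ y) ^ 2) x = χ * ρ x * deriv φ x ∧
      D * deriv (deriv φ) x + a * ρ x - b * φ x = 0 := by
  set s := Real.sqrt ω with hs
  have hs2 : s ^ 2 = ω := Real.sq_sqrt hωpos.le
  set A := 2 * κ * b * K / (ω * χ * D) / Real.cos (s * xb) with hA
  have hφfun : φ = fun x => A * Real.cos (s * x) - a * K / (ω * D) := by
    funext x; rw [hφ x]; ring
  have hρfun : ρ = fun x => χ / (2 * κ) * φ x + K := funext hρ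
  have hder : ∀ x : ℝ, HasDerivAt φ (-(A * s) * Real.sin (s * x)) x := by
    intro x
    have h1 : HasDerivAt (fun y : ℝ => s * y) s x := by
      simpa using (hasDerivAt_id x).const_mul s
    have h2 := (Real.hasDerivAt_cos (s * x)).comp x h1
    have h3 := (h2.const_mul A).sub_const (a * K / (ω * D))
    rw [hφfun]
    exact h3.congr_deriv (by ring)
  have hderiv1 : deriv φ = fun x => -(A * s) * Real.sin (s * x) := by
    funext x; exact (hder x).deriv
  have hder2 : ∀ x : ℝ, HasDerivAt (deriv φ) (-(A * ω) * Real.cos (s * x)) x := by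
    intro x
    have h1 : HasDerivAt (fun y : ℝ => s * y) s x := by
      simpa using (hasDerivAt_id x).const_mul s
    have h2 := (Real.hasDerivAt_sin (s * x)).comp x h1
    have h3 := h2.const_mul (-(A * s))
    rw [hderiv1]
    exact h3.congr_deriv (by rw [← hs2]; ring)
  intro x hx
  constructor
  · have hρd : HasDerivAt ρ (χ / (2 * κ) * (-(A * s) * Real.sin (s * x))) x := by
      rw [hρfun]
      exact ((hder x).const_mul (χ / (2 * κ))).add_const K
    have hsq : HasDerivAt (fun y => κ * (ρ y) ^ 2)
        (κ * (2 * ρ x ^ 1 * (χ / (2 * κ) * (-(A * s) * Real.sin (s * x))))) x := by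
      exact (hρd.pow 2).const_mul κ
    rw [hsq.deriv, (hder x).deriv]
    field_simp
  · rw [(hder2 x).deriv, hρ x, hφ x]
    have hX : a * χ = 2 * κ * D * ω + 2 * κ * b := by
      rw [hω]; field_simp; ring
    have hcos : (2 * κ * b * K / (ω * χ * D)) * Real.cos (s * x) / Real.cos (s * xb)
        = A * Real.cos (s * x) := by rw [hA]; ring
    rw [hcos]
    have hωne : ω ≠ 0 := hωpos.ne'
    have hDne : D ≠ 0 := hD.ne'
    have hκne : κ ≠ 0 := hκ.ne'
    clear_value A
    clear hA hφfun hder hderiv1 hder2 hcos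
    field_simp
    linear_combination (D * ω * A * Real.cos (s * x) - a * K) * hX
end
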